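/- Let q ≥ 2 and e ≥ 0 be integers, and define B_H(n) = q^n / (∑_{i=0}^{e} C(n,i)(q-1)^i). Then B_H is log-convex in n: for all integers n1 ≤ n2 with n1 ≥ 1, B_H(n1)·B_H(n2) ≤ B_H(n1-1)·B_H(n2+1). -/

import Mathlib

open Finset

namespace HBLC

noncomputable def Dd (x : ℝ) (n k : ℕ) : ℝ := ∑ i ∈ range k, (n.choose i : ℝ) * x ^ i

lemma Dd_nonneg {x : ℝ} (hx : 0 ≤ x) (n k : ℕ) : 0 ≤ Dd x n k :=
  Finset.sum_nonneg fun i _ => mul_nonneg (Nat.cast_nonneg _) (pow_nonneg hx i)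

lemma Dd_succ_ge_one {x : ℝ} (hx : 0 ≤ x) (n k : ℕ) : 1 ≤ Dd x n (k+1) := by
  rw [Dd, Finset.sum_range_succ']
  have h0 : ((n.choose 0 : ℕ) : ℝ) * x ^ 0 = 1 := by simp
  rw [h0]
  have : 0 ≤ ∑ i ∈ range k, (n.choose (i+1) : ℝ) * x ^ (i+1) :=
    Finset.sum_nonneg fun i _ => mul_nonneg (Nat.cast_nonneg _) (pow_nonneg hx _)
  linarith

lemma Dd_rec (x : ℝ) (n k : ℕ) : Dd x (n+1) (k+1) = Dd x n (k+1) + x * Dd x n k := by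
  induction k with
  | zero => simp [Dd]
  | succ k ih =>
      rw [Dd, Finset.sum_range_succ, ← Dd, ih]
      rw [show Dd x n (k+2) = Dd x n (k+1) + (n.choose (k+1) : ℝ) * x ^ (k+1) from by
        rw [Dd, Finset.sum_range_succ, ← Dd]]
      rw [show Dd x n (k+1) = Dd x n k + (n.choose k : ℝ) * x ^ k from by
        rw [Dd, Finset.sum_range_succ, ← Dd]]
      have hc : ((n+1).choose (k+1) : ℝ) = (n.choose (k+1) : ℝ) + (n.choose k : ℝ) := by
        rw [Nat.choose_succ_succ]; push_cast; ring
      rw [hc]; ring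

lemma choose_ineq (n j k : ℕ) (h : j ≤ k) :
    n.choose j * n.choose (k+1) ≤ n.choose (j+1) * n.choose k := by
  by_cases hk : n ≤ k
  · have : n.choose (k+1) = 0 := Nat.choose_eq_zero_of_lt (by omega)
    simp [this]
  · push_neg at hk
    have hj : j < n := lt_of_le_of_lt h hk
    have key : (n - k) * (j + 1) ≤ (n - j) * (k + 1) := by
      have h1 : k ≤ n := hk.le
      have h2 : j ≤ n := hj.le
      zify [h1, h2]
      nlinarith [Int.ofNat_le.mpr h]
    have e1 : n.choose (k+1) * (k+1) = n.choose k * (n - k) := Nat.choose_succ_right_eq n k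
    have e2 : n.choose (j+1) * (j+1) = n.choose j * (n - j) := Nat.choose_succ_right_eq n j
    have pos : 0 < (j+1) * (k+1) := by positivity
    apply Nat.le_of_mul_le_mul_right _ pos
    calc n.choose j * n.choose (k+1) * ((j+1) * (k+1))
        = n.choose j * (n.choose (k+1) * (k+1)) * (j+1) := by ring
      _ = n.choose j * (n.choose k * (n - k)) * (j+1) := by rw [e1]
      _ = n.choose j * n.choose k * ((n - k) * (j+1)) := by ring
      _ ≤ n.choose j * n.choose k * ((n - j) * (k+1)) := Nat.mul_le_mul_left _ key
      _ = n.choose j * (n - j) * n.choose k * (k+1) := by ring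
      _ = n.choose (j+1) * (j+1) * n.choose k * (k+1) := by rw [e2]
      _ = n.choose (j+1) * n.choose k * ((j+1) * (k+1)) := by ring

lemma a_ineq {x : ℝ} (hx : 0 ≤ x) (n j k : ℕ) (h : j ≤ k) :
    ((n.choose j : ℝ) * x ^ j) * ((n.choose (k+1) : ℝ) * x ^ (k+1)) ≤
    ((n.choose (j+1) : ℝ) * x ^ (j+1)) * ((n.choose k : ℝ) * x ^ k) := by
  have h1 : ((n.choose j : ℝ) * x ^ j) * ((n.choose (k+1) : ℝ) * x ^ (k+1))
      = ((n.choose j * n.choose (k+1) : ℕ) : ℝ) * x ^ (j + (k+1)) := by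
    push_cast; ring
  have h2 : ((n.choose (j+1) : ℝ) * x ^ (j+1)) * ((n.choose k : ℝ) * x ^ k)
      = ((n.choose (j+1) * n.choose k : ℕ) : ℝ) * x ^ (j + (k+1)) := by
    push_cast; ring
  rw [h1, h2]
  apply mul_le_mul_of_nonneg_right _ (pow_nonneg hx _)
  exact_mod_cast choose_ineq n j k h

lemma stepA {x : ℝ} (hx : 0 ≤ x) (n k : ℕ) :
    Dd x n k * ((n.choose (k+1) : ℝ) * x ^ (k+1)) ≤
    Dd x n (k+1) * ((n.choose k : ℝ) * x ^ k) := by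
  rw [Dd, Finset.sum_mul]
  calc ∑ i ∈ range k, ((n.choose i : ℝ) * x ^ i) * ((n.choose (k+1) : ℝ) * x ^ (k+1))
      ≤ ∑ i ∈ range k, ((n.choose (i+1) : ℝ) * x ^ (i+1)) * ((n.choose k : ℝ) * x ^ k) := by
        apply Finset.sum_le_sum
        intro i hi
        exact a_ineq hx n i k (le_of_lt (Finset.mem_range.mp hi))
    _ = (∑ i ∈ range k, (n.choose (i+1) : ℝ) * x ^ (i+1)) * ((n.choose k : ℝ) * x ^ k) := by
        rw [Finset.sum_mul]
    _ ≤ Dd x n (k+1) * ((n.choose k : ℝ) * x ^ k) := by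
        apply mul_le_mul_of_nonneg_right _ (mul_nonneg (Nat.cast_nonneg _) (pow_nonneg hx _))
        rw [Dd, Finset.sum_range_succ']
        have : (0:ℝ) ≤ ((n.choose 0 : ℕ) : ℝ) * x ^ 0 := by positivity
        linarith

lemma logconcave_k {x : ℝ} (hx : 0 ≤ x) (n k : ℕ) :
    Dd x n k * Dd x n (k+2) ≤ Dd x n (k+1) * Dd x n (k+1) := by
  have e1 : Dd x n (k+2) = Dd x n (k+1) + (n.choose (k+1) : ℝ) * x ^ (k+1) := by
    rw [Dd, Finset.sum_range_succ, ← Dd]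
  have e2 : Dd x n (k+1) = Dd x n k + (n.choose k : ℝ) * x ^ k := by
    rw [Dd, Finset.sum_range_succ, ← Dd]
  have h := stepA hx n k
  nlinarith [h, Dd_nonneg hx n k, Dd_nonneg hx n (k+1)]

lemma consec {x : ℝ} (hx : 0 ≤ x) (e n : ℕ) :
    Dd x n (e+1) * Dd x (n+2) (e+1) ≤ Dd x (n+1) (e+1) * Dd x (n+1) (e+1) := by
  cases e with
  | zero => simp [Dd]
  | succ f =>
      have r1 : Dd x (n+1) (f+2) = Dd x n (f+2) + x * Dd x n (f+1) := Dd_rec x n (f+1)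
      have r2 : Dd x (n+2) (f+2) = Dd x (n+1) (f+2) + x * Dd x (n+1) (f+1) := Dd_rec x (n+1) (f+1)
      have r3 : Dd x (n+1) (f+1) = Dd x n (f+1) + x * Dd x n f := Dd_rec x n f
      have lc : Dd x n f * Dd x n (f+2) ≤ Dd x n (f+1) * Dd x n (f+1) := logconcave_k hx n f
      show Dd x n (f+2) * Dd x (n+2) (f+2) ≤ Dd x (n+1) (f+2) * Dd x (n+1) (f+2)
      rw [r2, r1, r3]
      nlinarith [mul_le_mul_of_nonneg_left lc (mul_nonneg hx hx)]

lemma chain {x : ℝ} (hx : 0 ≤ x) (e m n : ℕ) (h : m ≤ n) :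
    Dd x m (e+1) * Dd x (n+1) (e+1) ≤ Dd x (m+1) (e+1) * Dd x n (e+1) := by
  induction n, h using Nat.le_induction with
  | base => rw [mul_comm]
  | succ n hmn ih =>
      have c := consec hx e n
      have hn : 0 < Dd x n (e+1) := lt_of_lt_of_le one_pos (Dd_succ_ge_one hx n e)
      have key : Dd x m (e+1) * Dd x (n+2) (e+1) * Dd x n (e+1)
          ≤ Dd x (m+1) (e+1) * Dd x (n+1) (e+1) * Dd x n (e+1) := by
        nlinarith [ih, c, Dd_nonneg hx m (e+1), Dd_nonneg hx (n+1) (e+1)]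
      exact le_of_mul_le_mul_right key hn

end HBLC

theorem hamming_bound_log_convex (q e : ℕ) (hq : 2 ≤ q)
    (B : ℕ → ℝ)
    (hB : ∀ n, B n = (q : ℝ) ^ n /
      ∑ i ∈ range (e + 1), (n.choose i : ℝ) * ((q : ℝ) - 1) ^ i)
    (n1 n2 : ℕ) (h1 : 1 ≤ n1) (h12 : n1 ≤ n2) :
    B n1 * B n2 ≤ B (n1 - 1) * B (n2 + 1) := by
  set x : ℝ := (q : ℝ) - 1 with hxdef
  have hq2 : (2:ℝ) ≤ (q:ℝ) := by exact_mod_cast hq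
  have hx : 0 ≤ x := by simp [hxdef]; linarith
  obtain ⟨m, rfl⟩ : ∃ m, n1 = m + 1 := ⟨n1 - 1, (Nat.succ_pred_eq_of_pos h1).symm⟩
  have hDs : ∀ n : ℕ, ∑ i ∈ range (e + 1), (n.choose i : ℝ) * x ^ i = HBLC.Dd x n (e+1) :=
    fun n => rfl
  rw [hB, hB, hB, hB]
  simp only [Nat.add_sub_cancel]
  rw [hDs, hDs, hDs, hDs]
  have hm : m ≤ n2 := by omega
  have hchain := HBLC.chain hx e m n2 hm
  have hpos : ∀ n : ℕ, 0 < HBLC.Dd x n (e+1) :=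
    fun n => lt_of_lt_of_le one_pos (HBLC.Dd_succ_ge_one hx n e)
  rw [div_mul_div_comm, div_mul_div_comm]
  have hnum : (q:ℝ) ^ (m+1) * (q:ℝ) ^ n2 = (q:ℝ) ^ m * (q:ℝ) ^ (n2+1) := by ring
  rw [hnum]
  apply div_le_div_of_nonneg_left _ _ _
  · positivity
  · exact mul_pos (hpos m) (hpos (n2+1))
  · exact hchain
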